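/- Ramanujan's first transformation. For every complex number n and every complex x with |x| < 1, (1 − x²)^{−1/2} · Σ_{k=0}^{∞} (−n)_k (n)_k x^{2k} / ( (1/2)_k k! ) = Σ_{k=0}^{∞} (1/2 − n)_k (1/2 + n)_k x^{2k} / ( (1/2)_k k! ), where (1 − x²)^{−1/2} denotes the principal branch. -/

import Mathlib

noncomputable def poch (a : ℂ) (k : ℕ) : ℂ := ∏ i ∈ Finset.range k, (a + i)

lemma poch_zero (a : ℂ) : poch a 0 = 1 := by simp [poch]

lemma poch_succ (a : ℂ) (k : ℕ) : poch a (k + 1) = poch a k * (a + k) := by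
  simp [poch, Finset.prod_range_succ]

lemma poch_add (a : ℂ) (k m : ℕ) : poch a (k + m) = poch a k * poch (a + k) m := by
  induction m with
  | zero => simp [poch_zero]
  | succ m ih => rw [← Nat.add_assoc, poch_succ, ih, poch_succ]; push_cast; ring

lemma poch_one (a : ℂ) : poch a 1 = a := by simp [poch]

lemma poch_congr {a b : ℂ} (h : a = b) (k : ℕ) : poch a k = poch b k := by rw [h]

lemma poch_half_ne_zero (k : ℕ) : poch (1/2 : ℂ) k ≠ 0 := by
  rw [poch]
  refine Finset.prod_ne_zero_iff.2 fun i _ => ?_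
  intro h
  have := congrArg Complex.re h
  simp [Complex.add_re] at this
  nlinarith [this]

lemma key (n : ℂ) : ∀ K : ℕ, ∑ k ∈ Finset.range (K+1),
    (K.choose k : ℂ) * poch (-n) k * poch n k * poch (1/2) (K - k) * poch (1/2 + k) (K - k)
    = poch (1/2 - n) K * poch (1/2 + n) K := by
  intro K
  induction K with
  | zero => simp [poch_zero]
  | succ K ih =>
    set F : ℕ → ℕ → ℂ := fun K k => (K.choose k : ℂ) * poch (-n) k * poch n k *
      poch (1/2) (K - k) * poch (1/2 + k) (K - k) with hF
    set G : ℕ → ℂ := fun k => -((K+1).choose k : ℂ) * k * poch (-n) k * poch n k *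
      poch (1/2) (K + 1 - k) * poch ((k : ℂ) - 1/2) (K + 1 - k) with hG
    set c : ℂ := (1/2 - n + K) * (1/2 + n + K) with hc
    have tel : ∀ k ∈ Finset.range (K+2), ((K : ℂ) + 1) * (F (K+1) k - c * F K k) = G (k+1) - G k := by
      intro k hk
      rw [Finset.mem_range] at hk
      rcases Nat.lt_or_ge k (K+1) with hkK | hkK
      · -- k ≤ K
        have hkK' : k ≤ K := Nat.lt_succ_iff.1 hkK
        obtain ⟨m', rfl⟩ : ∃ m', K = k + m' := ⟨K - k, (Nat.add_sub_cancel' hkK').symm⟩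
        have e1 : k + m' + 1 - k = m' + 1 := by omega
        have e2 : k + m' - k = m' := by omega
        have e3 : k + m' + 1 - (k + 1) = m' := by omega
        have hsplit : poch ((k:ℂ) - 1/2) (m' + 1) = ((k:ℂ) - 1/2) * poch (1/2 + k) m' := by
          rw [show m' + 1 = 1 + m' by omega, poch_add, poch_one]
          congr 1
          exact poch_congr (by push_cast; ring) m'
        have hsplit2 : poch (((k+1 : ℕ) : ℂ) - 1/2) m' = poch (1/2 + k) m' :=
          poch_congr (by push_cast; ring) m'
        simp only [hF, hG, hc, e1, e2, e3]
        rw [poch_succ (-n) k, poch_succ n k, poch_succ (1/2 : ℂ) m',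
          poch_succ (1/2 + (k:ℂ)) m', hsplit]
        have h2 : ((k:ℂ) + (m':ℂ) + 1) * (((k+m').choose k : ℕ) : ℂ)
            = (((k+m'+1).choose (k+1) : ℕ) : ℂ) * ((k:ℂ) + 1) := by
          exact_mod_cast congrArg (Nat.cast : ℕ → ℂ) (Nat.add_one_mul_choose_eq (k+m') k)
        have hnat1 : (k+m'+1) * ((k+m').choose k) = ((k+m'+1).choose k) * (m'+1) := by
          have e : (k+m').choose k = (k+m').choose m' := by
            rw [← Nat.choose_symm (show m' ≤ k+m' by omega)]; congr 1; omega
          have e' : (k+m'+1).choose (m'+1) = (k+m'+1).choose k := by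
            rw [← Nat.choose_symm (show k ≤ k+m'+1 by omega)]; congr 1; omega
          rw [e, ← e']
          exact Nat.add_one_mul_choose_eq (k+m') m'
        have h1 : ((k:ℂ) + (m':ℂ) + 1) * (((k+m').choose k : ℕ) : ℂ)
            = (((k+m'+1).choose k : ℕ) : ℂ) * ((m':ℂ) + 1) := by
          exact_mod_cast congrArg (Nat.cast : ℕ → ℂ) hnat1
        have hm : ((m':ℂ)+1) ≠ 0 := Nat.cast_add_one_ne_zero m'
        have hk1 : ((k:ℂ)+1) ≠ 0 := Nat.cast_add_one_ne_zero k
        have hB1 : (((k+m'+1).choose k : ℕ) : ℂ)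
            = ((k:ℂ) + (m':ℂ) + 1) * (((k+m').choose k : ℕ) : ℂ) / ((m':ℂ)+1) := by
          rw [eq_div_iff hm]; linear_combination -h1
        have hB3 : (((k+m'+1).choose (k+1) : ℕ) : ℂ)
            = ((k:ℂ) + (m':ℂ) + 1) * (((k+m').choose k : ℕ) : ℂ) / ((k:ℂ)+1) := by
          rw [eq_div_iff hk1]; linear_combination -h2
        rw [hsplit2, hB1, hB3]
        push_cast
        field_simp
        ring
      · -- k = K + 1
        have hk1 : k = K + 1 := by omega
        subst hk1
        have z1 : (K.choose (K+1) : ℂ) = 0 := by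
          norm_cast
          exact Nat.choose_eq_zero_of_lt (by omega)
        have z2 : (((K+1).choose (K+2)) : ℂ) = 0 := by
          norm_cast
          exact Nat.choose_eq_zero_of_lt (by omega)
        simp only [hF, hG, z1, z2, Nat.sub_self, show K + 1 - (K+1+1) = 0 by omega,
          show K + 1 - (K + 1) = 0 by omega, poch_zero]
        push_cast
        ring
    have hsum := Finset.sum_congr rfl tel
    rw [Finset.sum_range_sub G] at hsum
    have hG0 : G 0 = 0 := by simp [hG]
    have hGend : G (K+2) = 0 := by
      have : (K+1).choose (K+2) = 0 := Nat.choose_eq_zero_of_lt (by omega)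
      simp [hG, this]
    rw [hG0, hGend, sub_zero] at hsum
    simp only [mul_sub, Finset.sum_sub_distrib, ← Finset.mul_sum] at hsum
    have hsum2 : (∑ k ∈ Finset.range (K+2), F (K+1) k)
        = c * ∑ k ∈ Finset.range (K+2), F K k := by
      have hKne : ((K:ℂ)+1) ≠ 0 := Nat.cast_add_one_ne_zero K
      apply mul_left_cancel₀ hKne
      rw [sub_eq_zero] at hsum
      rw [hsum, Finset.mul_sum]
    have hFtop : F K (K+1) = 0 := by
      have : K.choose (K+1) = 0 := Nat.choose_eq_zero_of_lt (by omega)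
      simp [hF, this]
    have ih' : ∑ k ∈ Finset.range (K+1), F K k = poch (1/2 - n) K * poch (1/2 + n) K := by
      simp only [hF]; exact ih
    have final : ∑ k ∈ Finset.range (K+2), F (K+1) k
        = poch (1/2 - n) (K+1) * poch (1/2 + n) (K+1) := by
      rw [hsum2, Finset.sum_range_succ, hFtop, add_zero, ih',
        poch_succ (1/2 - n) K, poch_succ (1/2 + n) K, hc]
      ring
    simpa only [hF] using final

lemma half_add_ne_zero (k : ℕ) : (1/2 : ℂ) + k ≠ 0 := by
  intro h
  have := congrArg Complex.re h
  simp [Complex.add_re] at this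
  nlinarith [Nat.cast_nonneg (α := ℝ) k, this]

lemma nat_add_one_ne_zero (k : ℕ) : ((k : ℂ) + 1) ≠ 0 := Nat.cast_add_one_ne_zero k

open Filter Topology Finset

lemma tendsto_div_shift (c : ℂ) (d : ℝ) (hd : 0 < d) (hd1 : d ≤ 1) :
    Tendsto (fun k : ℕ => c / ((k : ℂ) + d)) atTop (𝓝 0) := by
  rw [tendsto_zero_iff_norm_tendsto_zero]
  have hb : ∀ k : ℕ, ‖c / ((k : ℂ) + d)‖ ≤ (‖c‖ / d) * (1 / (k + 1)) := by
    intro k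
    rw [norm_div]
    have he : ((k : ℂ) + d) = (((k : ℝ) + d : ℝ) : ℂ) := by push_cast; ring
    rw [he, Complex.norm_real, Real.norm_of_nonneg (by positivity)]
    rw [div_le_iff₀ (by positivity)]
    have h1 : ‖c‖ * (k + 1) ≤ (‖c‖ / d) * ((k:ℝ) + d) := by
      rw [div_mul_eq_mul_div, le_div_iff₀ hd]
      have : d * ((k:ℝ) + 1) ≤ ((k:ℝ) + d) * 1 := by nlinarith [Nat.cast_nonneg (α := ℝ) k, hd1]
      nlinarith [norm_nonneg c]
    calc ‖c‖ = (‖c‖ * (k+1)) * (1/(k+1)) := by field_simp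
    _ ≤ ((‖c‖/d) * ((k:ℝ)+d)) * (1/(k+1)) := by
        apply mul_le_mul_of_nonneg_right h1 (by positivity)
    _ = ‖c‖ / d * (1 / (↑k + 1)) * ((k:ℝ) + d) := by ring
  have hlim := tendsto_one_div_add_atTop_nhds_zero_nat.const_mul (‖c‖ / d)
  rw [mul_zero] at hlim
  exact squeeze_zero (fun k => norm_nonneg _) hb hlim

lemma complex_shift_ne_zero (d : ℝ) (hd : 0 < d) (k : ℕ) : ((k : ℂ) + d) ≠ 0 := by
  intro h
  have := congrArg Complex.re h
  simp [Complex.add_re] at this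
  nlinarith [Nat.cast_nonneg (α := ℝ) k, this]

lemma tendsto_shift_div (a : ℂ) (d : ℝ) (hd : 0 < d) (hd1 : d ≤ 1) :
    Tendsto (fun k : ℕ => (a + (k:ℂ)) / ((k : ℂ) + d)) atTop (𝓝 1) := by
  have heq : ∀ k : ℕ, (a + (k:ℂ)) / ((k : ℂ) + d) = 1 + (a - d) / ((k:ℂ) + d) := by
    intro k
    have h := complex_shift_ne_zero d hd k
    field_simp
    ring
  simp_rw [heq]
  have := (tendsto_div_shift (a - d) d hd hd1).const_add 1
  simpa using this

lemma tendsto_ratio (a b z : ℂ) :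
    Tendsto (fun k : ℕ => ‖(a + k) * (b + k) * z / ((1/2 + (k:ℂ)) * ((k:ℂ) + 1))‖)
      atTop (𝓝 ‖z‖) := by
  have heq : ∀ k : ℕ, (a + k) * (b + k) * z / ((1/2 + (k:ℂ)) * ((k:ℂ) + 1))
      = z * ((a + (k:ℂ)) / ((k:ℂ) + (1:ℝ))) * ((b + (k:ℂ)) / ((k:ℂ) + ((1:ℝ)/2 : ℝ))) := by
    intro k
    have h1 := complex_shift_ne_zero 1 one_pos k
    have h2 := complex_shift_ne_zero (1/2) (by norm_num) k
    push_cast at h1 h2 ⊢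
    field_simp
    ring
  simp_rw [heq]
  have h1 := tendsto_shift_div a 1 one_pos le_rfl
  have h2 := tendsto_shift_div b (1/2) (by norm_num) (by norm_num)
  have := (tendsto_const_nhds (x := z) (f := atTop (α := ℕ))).mul h1 |>.mul h2
  rw [mul_one, mul_one] at this
  exact this.norm

lemma summable_norm_of_ratio {T : ℕ → ℂ} {q : ℕ → ℂ} (hstep : ∀ k, T (k+1) = T k * q k)
    {r : ℝ} (hr1 : r < 1) (hev : ∀ᶠ k in atTop, ‖q k‖ ≤ r) :
    Summable (fun k => ‖T k‖) := by
  apply summable_of_ratio_norm_eventually_le (r := r) hr1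
  filter_upwards [hev] with k hk
  rw [Real.norm_of_nonneg (norm_nonneg _), Real.norm_of_nonneg (norm_nonneg _), hstep k,
    norm_mul, mul_comm r]
  exact mul_le_mul_of_nonneg_left hk (norm_nonneg _)

lemma summable_norm_general (a b z : ℂ) (hz : ‖z‖ < 1) :
    Summable (fun k : ℕ => ‖poch a k * poch b k * z ^ k / (poch (1/2) k * (k.factorial : ℂ))‖) := by
  have hstep : ∀ k : ℕ, poch a (k+1) * poch b (k+1) * z ^ (k+1) /
        (poch (1/2) (k+1) * ((k+1).factorial : ℂ))
      = poch a k * poch b k * z ^ k / (poch (1/2) k * (k.factorial : ℂ)) *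
        ((a + k) * (b + k) * z / ((1/2 + (k:ℂ)) * ((k:ℂ) + 1))) := by
    intro k
    have hhalf := half_add_ne_zero k
    have hfac : ((k.factorial : ℂ)) ≠ 0 := Nat.cast_ne_zero.2 k.factorial_ne_zero
    have hk1 := nat_add_one_ne_zero k
    have hp := poch_half_ne_zero k
    simp only [poch_succ, Nat.factorial_succ]
    push_cast
    field_simp
    ring
  have hev : ∀ᶠ k : ℕ in atTop,
      ‖(a + k) * (b + k) * z / ((1/2 + (k:ℂ)) * ((k:ℂ) + 1))‖ ≤ (1 + ‖z‖)/2 :=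
    (tendsto_ratio a b z).eventually_le_const (by linarith)
  exact summable_norm_of_ratio hstep (by linarith) hev

open Polynomial

lemma desc_poch (a : ℂ) (k : ℕ) : (descPochhammer ℤ k).smeval (-a) = (-1)^k * poch a k := by
  induction k with
  | zero => simp [poch]
  | succ k ih =>
    rw [descPochhammer_succ_right, smeval_mul, ih, smeval_sub, smeval_X, smeval_natCast,
      poch_succ]
    push_cast
    ring

lemma poch_vandermonde (a b : ℂ) (K : ℕ) :
    poch (a + b) K = ∑ ij ∈ antidiagonal K, (K.choose ij.1 : ℂ) * (poch a ij.1 * poch b ij.2) := by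
  have h := Ring.descPochhammer_smeval_add (R := ℂ) (r := -a) (s := -b) K (Commute.all _ _)
  have hL : (descPochhammer ℤ K).smeval (-a + -b) = (-1)^K * poch (a+b) K := by
    rw [show -a + -b = -(a+b) by ring, desc_poch]
  have hR : ∑ ij ∈ antidiagonal K, (Nat.choose K ij.1 : ℂ) *
        ((descPochhammer ℤ ij.1).smeval (-a) * (descPochhammer ℤ ij.2).smeval (-b))
      = (-1)^K * ∑ ij ∈ antidiagonal K, (K.choose ij.1 : ℂ) * (poch a ij.1 * poch b ij.2) := by
    rw [Finset.mul_sum]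
    refine Finset.sum_congr rfl fun ij hij => ?_
    rw [desc_poch, desc_poch]
    have hij' : ij.1 + ij.2 = K := Finset.HasAntidiagonal.mem_antidiagonal.1 hij
    rw [← hij', pow_add]
    ring
  rw [hL, hR] at h
  exact mul_left_cancel₀ (pow_ne_zero K (by norm_num : (-1:ℂ) ≠ 0)) h

lemma poch_one_eq_factorial (K : ℕ) : poch 1 K = (K.factorial : ℂ) := by
  induction K with
  | zero => simp [poch]
  | succ K ih => rw [poch_succ, ih, Nat.factorial_succ]; push_cast; ring

open Filter Topology Finset Polynomial Complex Metric

lemma poch_half_norm_le (m : ℕ) : ‖poch (1/2 : ℂ) m‖ ≤ (m.factorial : ℝ) := by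
  induction m with
  | zero => simp [poch_zero]
  | succ m ih =>
    rw [poch_succ, norm_mul, Nat.factorial_succ]
    have h1 : ‖(1/2 : ℂ) + m‖ ≤ (m : ℝ) + 1 := by
      have he : ((1/2 : ℂ) + m) = (((1/2 + m : ℝ)) : ℂ) := by push_cast; ring
      rw [he, Complex.norm_real, Real.norm_of_nonneg (by positivity)]
      have : (0:ℝ) ≤ m := Nat.cast_nonneg m
      linarith
    calc ‖poch (1/2:ℂ) m‖ * ‖(1/2:ℂ) + m‖ ≤ (m.factorial : ℝ) * ((m:ℝ) + 1) := by
          apply mul_le_mul ih h1 (norm_nonneg _) (by positivity)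
    _ = (((m+1) * m.factorial : ℕ) : ℝ) := by push_cast; ring

lemma summable_norm_B {z : ℂ} (hz : ‖z‖ < 1) :
    Summable (fun m : ℕ => ‖poch (1/2) m * z ^ m / (m.factorial : ℂ)‖) := by
  refine (summable_norm_general (1/2) (1/2) z hz).congr fun m => ?_
  congr 1
  have hp := poch_half_ne_zero m
  have hf : ((m.factorial : ℂ)) ≠ 0 := Nat.cast_ne_zero.2 m.factorial_ne_zero
  field_simp

lemma binom_mul_self {z : ℂ} (hz : ‖z‖ < 1) :
    (∑' m : ℕ, poch (1/2) m * z ^ m / (m.factorial : ℂ)) *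
      (∑' m : ℕ, poch (1/2) m * z ^ m / (m.factorial : ℂ)) = (1 - z)⁻¹ := by
  rw [tsum_mul_tsum_eq_tsum_sum_antidiagonal_of_summable_norm (summable_norm_B hz)
    (summable_norm_B hz)]
  rw [← tsum_geometric_of_norm_lt_one hz]
  refine tsum_congr fun K => ?_
  have hv := poch_vandermonde (1/2) (1/2) K
  rw [show (1/2 : ℂ) + 1/2 = 1 by norm_num, poch_one_eq_factorial] at hv
  have hterm : ∀ ij ∈ antidiagonal K,
      poch (1/2) ij.1 * z ^ ij.1 / (ij.1.factorial : ℂ) *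
        (poch (1/2) ij.2 * z ^ ij.2 / (ij.2.factorial : ℂ))
      = (K.choose ij.1 : ℂ) * (poch (1/2) ij.1 * poch (1/2) ij.2) * z ^ K /
          (K.factorial : ℂ) := by
    intro ij hij
    obtain ⟨i, j⟩ := ij
    have hij' : i + j = K := Finset.HasAntidiagonal.mem_antidiagonal.1 hij
    subst hij'
    have hnat : (i + j).choose i * j.factorial * i.factorial = (i+j).factorial := by
      have := Nat.add_choose_mul_factorial_mul_factorial j i
      rw [Nat.add_comm j i] at this
      exact this
    have hfac : (((i+j).factorial : ℕ) : ℂ) = (((i+j).choose i : ℕ) : ℂ) *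
        ((j.factorial : ℕ) : ℂ) * ((i.factorial : ℕ) : ℂ) := by
      exact_mod_cast congrArg (Nat.cast : ℕ → ℂ) hnat.symm
    have h1 : ((i.factorial : ℕ) : ℂ) ≠ 0 := Nat.cast_ne_zero.2 i.factorial_ne_zero
    have h2 : ((j.factorial : ℕ) : ℂ) ≠ 0 := Nat.cast_ne_zero.2 j.factorial_ne_zero
    have hK : (((i+j).factorial : ℕ) : ℂ) ≠ 0 := Nat.cast_ne_zero.2 (i+j).factorial_ne_zero
    simp only [pow_add]
    field_simp
    linear_combination poch (1/2) i * z ^ i * poch (1/2) j * z ^ j * hfac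
  rw [Finset.sum_congr rfl hterm]
  rw [← Finset.sum_div, ← Finset.sum_mul, ← hv]
  have hK : ((K.factorial : ℕ) : ℂ) ≠ 0 := Nat.cast_ne_zero.2 K.factorial_ne_zero
  field_simp

lemma binom_eq {z : ℂ} (hz : ‖z‖ < 1) :
    (∑' m : ℕ, poch (1/2) m * z ^ m / (m.factorial : ℂ)) = (1 - z) ^ (-(1/2) : ℂ) := by
  set r : ℝ := (1 + ‖z‖) / 2 with hr
  have hr0 : 0 ≤ r := by positivity
  have hr1 : r < 1 := by rw [hr]; linarith
  have hzr : z ∈ closedBall (0:ℂ) r := by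
    rw [mem_closedBall, dist_zero_right, hr]; linarith
  set s : Set ℂ := closedBall (0:ℂ) r with hs
  have hmem : ∀ w ∈ s, ‖w‖ ≤ r := by
    intro w hw; rwa [hs, mem_closedBall, dist_zero_right] at hw
  have hmem1 : ∀ w ∈ s, ‖w‖ < 1 := fun w hw => lt_of_le_of_lt (hmem w hw) hr1
  have hre : ∀ w ∈ s, 0 < (1 - w).re := by
    intro w hw
    have : w.re ≤ ‖w‖ := Complex.re_le_norm w
    have := hmem w hw
    simp only [Complex.sub_re, Complex.one_re]
    linarith
  have hne : ∀ w ∈ s, (1 : ℂ) - w ≠ 0 := by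
    intro w hw h
    have := hre w hw
    rw [h] at this
    simp at this
  set F : ℂ → ℂ := fun w => ∑' m : ℕ, poch (1/2) m * w ^ m / (m.factorial : ℂ) with hF
  set W : ℂ → ℂ := fun w => (1 - w) ^ ((1/2 : ℂ)) with hW
  have hFc : ContinuousOn F s := by
    rw [hF]
    refine continuousOn_tsum (u := fun m => r ^ m) (fun m => ?_) (summable_geometric_of_lt_one hr0 hr1) ?_
    · exact ((continuous_const.mul (continuous_pow m)).div_const _).continuousOn
    · intro m w hw
      rw [norm_div, norm_mul, norm_pow]
      have h1 : ‖poch (1/2 : ℂ) m‖ * ‖w‖ ^ m ≤ (m.factorial : ℝ) * r ^ m := by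
        apply mul_le_mul (poch_half_norm_le m) (pow_le_pow_left₀ (norm_nonneg w) (hmem w hw) m)
          (by positivity) (by positivity)
      have h2 : ‖((m.factorial : ℕ) : ℂ)‖ = (m.factorial : ℝ) := by
        rw [Complex.norm_natCast]
      rw [h2, div_le_iff₀ (by positivity)]
      calc ‖poch (1/2:ℂ) m‖ * ‖w‖ ^ m ≤ (m.factorial : ℝ) * r ^ m := h1
      _ = r ^ m * (m.factorial : ℝ) := by ring
  have hWc : ContinuousOn W s := by
    intro w hw
    have hca : ContinuousAt (fun u : ℂ => u ^ ((1/2 : ℂ))) (1 - w) :=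
      continuousAt_cpow_const (Complex.mem_slitPlane_iff.2 (Or.inl (hre w hw)))
    have hsub : ContinuousAt (fun u : ℂ => 1 - u) w :=
      (continuous_const.sub continuous_id).continuousAt
    have hcomp := hca.comp hsub
    have hca2 : ContinuousAt W w := by
      rw [hW]
      exact hcomp
    exact hca2.continuousWithinAt
  have hWW : ∀ w ∈ s, W w * W w = 1 - w := by
    intro w hw
    rw [hW]
    rw [← Complex.cpow_add _ _ (hne w hw)]
    norm_num
  have hG2 : ∀ w ∈ s, (F w * W w) * (F w * W w) = 1 := by
    intro w hw
    have h1 : F w * F w = (1 - w)⁻¹ := binom_mul_self (hmem1 w hw)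
    calc (F w * W w) * (F w * W w) = (F w * F w) * (W w * W w) := by ring
    _ = (1 - w)⁻¹ * (1 - w) := by rw [h1, hWW w hw]
    _ = 1 := inv_mul_cancel₀ (hne w hw)
  have hpm : ∀ w ∈ s, F w * W w = 1 ∨ F w * W w = -1 :=
    fun w hw => mul_self_eq_one_iff.1 (hG2 w hw)
  have h0s : (0 : ℂ) ∈ s := by
    rw [hs, mem_closedBall, dist_zero_right, norm_zero]; exact hr0
  have hg0 : F 0 * W 0 = 1 := by
    have hF0 : F 0 = 1 := by
      rw [hF]
      simp only
      rw [tsum_eq_single 0 (fun m hm => by simp [zero_pow hm])]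
      simp [poch_zero]
    have hW0 : W 0 = 1 := by
      rw [hW]; simp only [sub_zero, Complex.one_cpow]
    rw [hF0, hW0, mul_one]
  have hgz : F z * W z = 1 := by
    rcases hpm z hzr with h | h
    · exact h
    · exfalso
      have hcont : ContinuousOn (fun w => (F w * W w).re) s :=
        Complex.continuous_re.comp_continuousOn (hFc.mul hWc)
      have hicc := (convex_closedBall (0:ℂ) r).isPreconnected.intermediate_value hzr h0s hcont
      have h0mem : (0 : ℝ) ∈ Set.Icc ((F z * W z).re) ((F 0 * W 0).re) := by
        rw [h, hg0]
        norm_num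
      obtain ⟨c, hcs, hc⟩ := hicc h0mem
      have hc' : (F c * W c).re = 0 := hc
      rcases hpm c hcs with h' | h' <;> rw [h'] at hc' <;> norm_num at hc'
  have hWne : W z ≠ 0 := by
    intro h
    exact hne z hzr (by rw [← hWW z hzr, h, mul_zero])
  have hFW : F z = (W z)⁻¹ := eq_inv_of_mul_eq_one_left hgz
  calc F z = (W z)⁻¹ := hFW
  _ = ((1 - z) ^ ((1/2 : ℂ)))⁻¹ := by rw [hW]
  _ = (1 - z) ^ (-(1/2) : ℂ) := (Complex.cpow_neg _ _).symm

/-- **Ramanujan's first transformation.** -/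
theorem ramanujan_first_transformation (n x : ℂ) (hx : ‖x‖ < 1) :
    (1 - x ^ 2) ^ (-(1 / 2) : ℂ) *
      ∑' k : ℕ, poch (-n) k * poch n k * x ^ (2 * k) /
        (poch (1 / 2) k * (Nat.factorial k : ℂ))
    = ∑' k : ℕ, poch (1 / 2 - n) k * poch (1 / 2 + n) k * x ^ (2 * k) /
        (poch (1 / 2) k * (Nat.factorial k : ℂ)) := by
  set z : ℂ := x ^ 2 with hzdef
  have hz : ‖z‖ < 1 := by
    rw [hzdef, norm_pow]
    calc ‖x‖ ^ 2 ≤ ‖x‖ * 1 := by nlinarith [norm_nonneg x]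
    _ < 1 := by nlinarith [norm_nonneg x]
  have hA : (∑' k : ℕ, poch (-n) k * poch n k * x ^ (2 * k) /
        (poch (1 / 2) k * (Nat.factorial k : ℂ)))
      = ∑' k : ℕ, poch (-n) k * poch n k * z ^ k / (poch (1 / 2) k * (Nat.factorial k : ℂ)) :=
    tsum_congr fun k => by rw [hzdef, pow_mul]
  have hC : (∑' k : ℕ, poch (1 / 2 - n) k * poch (1 / 2 + n) k * x ^ (2 * k) /
        (poch (1 / 2) k * (Nat.factorial k : ℂ)))
      = ∑' k : ℕ, poch (1 / 2 - n) k * poch (1 / 2 + n) k * z ^ k /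
          (poch (1 / 2) k * (Nat.factorial k : ℂ)) :=
    tsum_congr fun k => by rw [hzdef, pow_mul]
  rw [hA, hC, ← binom_eq hz, mul_comm,
    tsum_mul_tsum_eq_tsum_sum_antidiagonal_of_summable_norm
      (summable_norm_general (-n) n z hz) (summable_norm_B hz)]
  refine tsum_congr fun K => ?_
  rw [Finset.Nat.sum_antidiagonal_eq_sum_range_succ_mk]
  have hterm : ∀ k ∈ Finset.range (K+1),
      poch (-n) k * poch n k * z ^ k / (poch (1 / 2) k * (Nat.factorial k : ℂ)) *
        (poch (1/2) (K - k) * z ^ (K - k) / ((K - k).factorial : ℂ))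
      = ((K.choose k : ℂ) * poch (-n) k * poch n k * poch (1/2) (K - k) *
          poch (1/2 + k) (K - k)) * (z ^ K / (poch (1/2) K * (K.factorial : ℂ))) := by
    intro k hk
    have hkK : k ≤ K := Nat.lt_succ_iff.1 (Finset.mem_range.1 hk)
    obtain ⟨m, rfl⟩ : ∃ m, K = k + m := ⟨K - k, (Nat.add_sub_cancel' hkK).symm⟩
    have e2 : k + m - k = m := by omega
    rw [e2]
    have hsplitp : poch (1/2 : ℂ) (k + m) = poch (1/2) k * poch (1/2 + k) m := poch_add _ _ _
    have hnat : (k + m).choose k * m.factorial * k.factorial = (k+m).factorial := by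
      have := Nat.add_choose_mul_factorial_mul_factorial m k
      rw [Nat.add_comm m k] at this
      exact this
    have hfac : (((k+m).factorial : ℕ) : ℂ) = (((k+m).choose k : ℕ) : ℂ) *
        ((m.factorial : ℕ) : ℂ) * ((k.factorial : ℕ) : ℂ) := by
      exact_mod_cast congrArg (Nat.cast : ℕ → ℂ) hnat.symm
    have h1 : ((k.factorial : ℕ) : ℂ) ≠ 0 := Nat.cast_ne_zero.2 k.factorial_ne_zero
    have h2 : ((m.factorial : ℕ) : ℂ) ≠ 0 := Nat.cast_ne_zero.2 m.factorial_ne_zero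
    have hK : (((k+m).factorial : ℕ) : ℂ) ≠ 0 := Nat.cast_ne_zero.2 (k+m).factorial_ne_zero
    have hp1 : poch (1/2 : ℂ) k ≠ 0 := poch_half_ne_zero k
    have hpK : poch (1/2 : ℂ) (k+m) ≠ 0 := poch_half_ne_zero (k+m)
    have hp2 : poch (1/2 + (k:ℂ)) m ≠ 0 := by
      intro h
      exact hpK (by rw [hsplitp, h, mul_zero])
    rw [pow_add, hsplitp]
    set p1 := poch (-n) k
    set p2 := poch n k
    set a := poch (1/2 : ℂ) k
    set u := poch (1/2 + (k:ℂ)) m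
    set b := poch (1/2 : ℂ) m
    have hCne : (((k+m).choose k : ℕ) : ℂ) ≠ 0 :=
      Nat.cast_ne_zero.2 (Nat.choose_pos hkK).ne'
    rw [hfac]
    field_simp
  rw [Finset.sum_congr rfl hterm, ← Finset.sum_mul, key n K]
  ring
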